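/- For every integer n ≥ 1, 1 = ((-1)^(n-1)/(n-1)!) · Σ_{k=1}^{n} bel_k · S₂(n,k), where bel_k are the Bell numbers of the second kind. -/

import Mathlib

open PowerSeries Finset

noncomputable section

/-- Composition of formal power series (the standard composition when the inner
series `f` has zero constant term, since then `coeff n (f ^ k) = 0` for `k > n`). -/
def pcomp {R : Type*} [CommRing R] (g f : PowerSeries R) : PowerSeries R :=
  PowerSeries.mk fun n =>
    ∑ k ∈ Finset.range (n + 1), PowerSeries.coeff k g * PowerSeries.coeff n (f ^ k)

/-- The formal power series `log(1+t)` over `ℚ`. -/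
def Lq : PowerSeries ℚ := PowerSeries.mk fun n => if n = 0 then 0 else (-1) ^ (n + 1) / n

/-- The formal power series `-log(1-t)` over `ℚ`. -/
def Labs : PowerSeries ℚ := PowerSeries.mk fun n => if n = 0 then 0 else 1 / n

/-- Signed Stirling numbers of the first kind: `(log(1+t))^k / k! = Σ S₁(n,k) tⁿ/n!`. -/
def S1 (n k : ℕ) : ℚ := n.factorial / k.factorial * PowerSeries.coeff n (Lq ^ k)

/-- Unsigned Stirling numbers of the first kind: `(-log(1-t))^k / k! = Σ |s(n,k)| tⁿ/n!`. -/
def uS1 (n k : ℕ) : ℚ := n.factorial / k.factorial * PowerSeries.coeff n (Labs ^ k)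

/-- Stirling numbers of the second kind: `(eᵗ-1)^k / k! = Σ S₂(n,k) tⁿ/n!`. -/
def S2 (n k : ℕ) : ℚ :=
  n.factorial / k.factorial * PowerSeries.coeff n ((PowerSeries.exp ℚ - 1) ^ k)

/-- `λ^(n-1) * (1)_{n,1/λ} = ∏_{j=1}^{n-1} (λ - j)`. -/
def dc (l : ℚ) (n : ℕ) : ℚ := ∏ j ∈ Finset.Ico 1 n, (l - j)

/-- Degenerate falling factorial `(1)_{n,λ} = ∏_{j=0}^{n-1} (1 - jλ)`. -/
def ffac (l : ℚ) (n : ℕ) : ℚ := ∏ j ∈ Finset.range n, (1 - j * l)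

/-- Degenerate logarithm `log_λ(1+t) = Σ_{n≥1} λ^{n-1}(1)_{n,1/λ} tⁿ/n!`. -/
def Ld (l : ℚ) : PowerSeries ℚ :=
  PowerSeries.mk fun n => if n = 0 then 0 else dc l n / n.factorial

/-- Degenerate exponential `e_λ(t) = Σ_{n≥0} (1)_{n,λ} tⁿ/n!`. -/
def Ed (l : ℚ) : PowerSeries ℚ := PowerSeries.mk fun n => ffac l n / n.factorial

/-- Degenerate Stirling numbers of the first kind. -/
def S1d (l : ℚ) (n k : ℕ) : ℚ :=
  n.factorial / k.factorial * PowerSeries.coeff n (Ld l ^ k)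

/-- Degenerate Stirling numbers of the second kind. -/
def S2d (l : ℚ) (n k : ℕ) : ℚ :=
  n.factorial / k.factorial * PowerSeries.coeff n ((Ed l - 1) ^ k)

/-- Bell numbers of the second kind: `log(1 + log(1+t)) = Σ_{n≥1} bel_n tⁿ/n!`. -/
def belNum (n : ℕ) : ℚ := n.factorial * PowerSeries.coeff n (pcomp Lq Lq)

/-- Bell numbers of the second kind via the explicit formula. -/
def belN (m : ℕ) : ℚ :=
  ∑ k ∈ Finset.Icc 1 m, (-1) ^ (k - 1) * (k - 1).factorial * S1 m k

/-- Bell polynomials of the second kind. -/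
def belPoly (n : ℕ) : Polynomial ℚ :=
  ∑ k ∈ Finset.Icc 1 n,
    Polynomial.C ((-1) ^ (k - 1) * (k - 1).factorial * S1 n k) * Polynomial.X ^ k

/-- Bell polynomials of the second kind evaluated at `x : ℚ`. -/
def belVal (x : ℚ) (m : ℕ) : ℚ :=
  ∑ k ∈ Finset.Icc 1 m, (-1) ^ (k - 1) * (k - 1).factorial * S1 m k * x ^ k

/-- Degenerate Bell numbers of the second kind via generating function. -/
def belNumD (l : ℚ) (n : ℕ) : ℚ := n.factorial * PowerSeries.coeff n (pcomp (Ld l) (Ld l))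

/-- Degenerate Bell numbers of the second kind via the explicit formula. -/
def belND (l : ℚ) (m : ℕ) : ℚ := ∑ j ∈ Finset.Icc 1 m, dc l j * S1d l m j

/-- Degenerate Bell polynomials of the second kind. -/
def belPolyD (l : ℚ) (n : ℕ) : Polynomial ℚ :=
  ∑ k ∈ Finset.Icc 1 n, Polynomial.C (dc l k * S1d l n k) * Polynomial.X ^ k

/-- `log(1+t)` as a power series over `ℚ[x]`. -/
def LqP : PowerSeries (Polynomial ℚ) :=
  PowerSeries.mk fun n => if n = 0 then 0 else Polynomial.C ((-1) ^ (n + 1) / n : ℚ)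

/-- `-log(1-t)` as a power series over `ℚ[x]`. -/
def LabsP : PowerSeries (Polynomial ℚ) :=
  PowerSeries.mk fun n => if n = 0 then 0 else Polynomial.C (1 / n : ℚ)

/-- `log(1-t)` as a power series over `ℚ[x]`. -/
def MP : PowerSeries (Polynomial ℚ) :=
  PowerSeries.mk fun n => if n = 0 then 0 else Polynomial.C (-(1 / n) : ℚ)

/-- `log_λ(1+t)` as a power series over `ℚ[x]`. -/
def LdP (l : ℚ) : PowerSeries (Polynomial ℚ) :=
  PowerSeries.mk fun n => if n = 0 then 0 else Polynomial.C (dc l n / n.factorial)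

/-- The polylogarithm `Li_k(y) = Σ_{m≥1} yᵐ/mᵏ` as a power series over `ℚ[x]`. -/
def LiP (k : ℤ) : PowerSeries (Polynomial ℚ) :=
  PowerSeries.mk fun m => if m = 0 then 0 else Polynomial.C (((m : ℚ) ^ k)⁻¹)

/-- The degenerate polylogarithm `Li_{k,λ}` as a power series over `ℚ[x]`. -/
def LidP (l : ℚ) (k : ℤ) : PowerSeries (Polynomial ℚ) :=
  PowerSeries.mk fun m => if m = 0 then 0 else
    Polynomial.C ((-1) ^ (m - 1) * dc l m / ((m - 1).factorial * (m : ℚ) ^ k))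

/-- `-x · log(1-t)` over `ℚ[x]`. -/
def innerP : PowerSeries (Polynomial ℚ) := PowerSeries.C (Polynomial.X : Polynomial ℚ) * LabsP

/-- `-x · log_λ(1-t)` over `ℚ[x]`. -/
def innerD (l : ℚ) : PowerSeries (Polynomial ℚ) :=
  PowerSeries.C (Polynomial.X : Polynomial ℚ) *
    PowerSeries.mk fun n => if n = 0 then 0 else
      Polynomial.C ((-1) ^ (n + 1) * dc l n / n.factorial)

/-- Poly-Bell polynomials of the second kind via generating function. -/
def polyBellP (k : ℤ) (n : ℕ) : Polynomial ℚ :=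
  (n.factorial : ℚ) • PowerSeries.coeff n (pcomp (LiP k) innerP)

/-- Poly-Bell polynomials of the second kind via the explicit formula. -/
def belPk (k : ℤ) (n : ℕ) : Polynomial ℚ :=
  ∑ l ∈ Finset.Icc 1 n,
    Polynomial.C ((((l : ℚ) ^ (k - 1))⁻¹) * (l - 1).factorial * uS1 n l) * Polynomial.X ^ l

/-- Degenerate poly-Bell polynomials of the second kind via generating function. -/
def belDPk (l : ℚ) (k : ℤ) (n : ℕ) : Polynomial ℚ :=
  (n.factorial : ℚ) • PowerSeries.coeff n (pcomp (LidP l k) (innerD l))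

/-- Degenerate poly-Bell polynomials of the second kind via the explicit formula. -/
def belE (l : ℚ) (k : ℤ) (m : ℕ) : Polynomial ℚ :=
  (-1 : Polynomial ℚ) ^ (m - 1) *
    ∑ j ∈ Finset.Icc 1 m,
      Polynomial.C ((((j : ℚ) ^ (k - 1))⁻¹) * dc l j * S1d l m j) * Polynomial.X ^ j


section Aux

lemma coeff_pow_zero {f : PowerSeries ℚ} (hf : constantCoeff f = 0) {k n : ℕ} (h : n < k) :
    PowerSeries.coeff n (f ^ k) = 0 :=
  PowerSeries.X_pow_dvd_iff.mp (pow_dvd_pow_of_dvd (PowerSeries.X_dvd_iff.mpr hf) k) n h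

lemma coeff_aeval {f : PowerSeries ℚ} (hf : constantCoeff f = 0) (P : Polynomial ℚ) (n : ℕ) :
    PowerSeries.coeff n (Polynomial.aeval f P)
      = ∑ k ∈ Finset.range (n + 1), P.coeff k * PowerSeries.coeff n (f ^ k) := by
  have hdeg : P.natDegree < max (P.natDegree + 1) (n + 1) :=
    lt_of_lt_of_le (Nat.lt_succ_self _) (le_max_left _ _)
  rw [Polynomial.aeval_def, Polynomial.eval₂_eq_sum_range' _ hdeg, map_sum]
  have hterm : ∀ i ∈ Finset.range (max (P.natDegree + 1) (n + 1)),
      PowerSeries.coeff n ((algebraMap ℚ (PowerSeries ℚ)) (P.coeff i) * f ^ i)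
        = P.coeff i * PowerSeries.coeff n (f ^ i) := fun i _ => by
    have : (algebraMap ℚ (PowerSeries ℚ)) (P.coeff i) = PowerSeries.C (P.coeff i) := by
      simp [PowerSeries.algebraMap_apply]
    rw [this, PowerSeries.coeff_C_mul]
  rw [Finset.sum_congr rfl hterm]
  refine (Finset.sum_subset (Finset.range_subset_range.mpr (le_max_right _ _)) fun i _ hi => ?_).symm
  have hni : n < i := by simp only [Finset.mem_range] at hi; omega
  rw [coeff_pow_zero hf hni, mul_zero]

lemma coeff_pcomp {f : PowerSeries ℚ} (hf : constantCoeff f = 0) (g : PowerSeries ℚ)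
    {N n : ℕ} (h : n < N) :
    PowerSeries.coeff n (pcomp g f)
      = PowerSeries.coeff n (Polynomial.aeval f (PowerSeries.trunc N g)) := by
  rw [coeff_aeval hf, pcomp, PowerSeries.coeff_mk]
  refine Finset.sum_congr rfl fun k hk => ?_
  have hk' : k < n + 1 := Finset.mem_range.mp hk
  rw [PowerSeries.coeff_trunc, if_pos (by omega)]

lemma pcomp_one (f : PowerSeries ℚ) : pcomp 1 f = 1 := by
  ext n
  rw [pcomp, PowerSeries.coeff_mk,
    Finset.sum_eq_single 0 (fun k _ hk => by
      rw [PowerSeries.coeff_one, if_neg hk, zero_mul]) (by simp)]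
  simp

lemma pcomp_mul {f : PowerSeries ℚ} (hf : constantCoeff f = 0) (g₁ g₂ : PowerSeries ℚ) :
    pcomp (g₁ * g₂) f = pcomp g₁ f * pcomp g₂ f := by
  ext n
  rw [coeff_pcomp hf _ (Nat.lt_succ_self n)]
  have h1 : PowerSeries.coeff n (Polynomial.aeval f (PowerSeries.trunc (n+1) (g₁ * g₂)))
      = PowerSeries.coeff n
          (Polynomial.aeval f (PowerSeries.trunc (n+1) g₁ * PowerSeries.trunc (n+1) g₂)) := by
    rw [coeff_aeval hf, coeff_aeval hf]
    refine Finset.sum_congr rfl fun k hk => ?_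
    have hk' : k < n + 1 := Finset.mem_range.mp hk
    congr 1
    rw [PowerSeries.coeff_trunc, if_pos hk', ← Polynomial.coeff_coe,
      PowerSeries.coeff_mul_eq_coeff_trunc_mul_trunc g₁ g₂ hk', ← Polynomial.coe_mul,
      Polynomial.coeff_coe]
  rw [h1, map_mul, PowerSeries.coeff_mul, PowerSeries.coeff_mul]
  refine Finset.sum_congr rfl fun p hp => ?_
  have hp' := Finset.HasAntidiagonal.mem_antidiagonal.mp hp
  rw [← coeff_pcomp hf g₁ (show p.1 < n + 1 by omega),
    ← coeff_pcomp hf g₂ (show p.2 < n + 1 by omega)]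

lemma pcomp_pow {f : PowerSeries ℚ} (hf : constantCoeff f = 0) (g : PowerSeries ℚ) (j : ℕ) :
    pcomp (g ^ j) f = (pcomp g f) ^ j := by
  induction j with
  | zero => simpa using pcomp_one f
  | succ j ih => rw [pow_succ, pow_succ, pcomp_mul hf, ih]

lemma deriv_exp_eq : d⁄dX ℚ (PowerSeries.exp ℚ) = PowerSeries.exp ℚ := by
  ext n
  rw [PowerSeries.coeff_derivative, PowerSeries.coeff_exp, PowerSeries.coeff_exp]
  have h1 : ((n+1).factorial : ℚ) ≠ 0 := Nat.cast_ne_zero.mpr (Nat.factorial_ne_zero _)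
  have h2 : ((n).factorial : ℚ) ≠ 0 := Nat.cast_ne_zero.mpr (Nat.factorial_ne_zero _)
  have h3 : ((n+1 : ℕ) : ℚ) ≠ 0 := Nat.cast_ne_zero.mpr (Nat.succ_ne_zero n)
  simp only [Algebra.algebraMap_self, RingHom.id_apply]
  rw [Nat.factorial_succ]
  push_cast
  field_simp

lemma constCoeff_fexp : constantCoeff (PowerSeries.exp ℚ - 1) = 0 := by
  rw [map_sub, PowerSeries.constantCoeff_exp, map_one, sub_self]

lemma pcomp_Lq_exp : pcomp Lq (PowerSeries.exp ℚ - 1) = PowerSeries.X := by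
  set f : PowerSeries ℚ := PowerSeries.exp ℚ - 1 with hfdef
  have hf : constantCoeff f = 0 := constCoeff_fexp
  ext n
  cases n with
  | zero =>
    rw [pcomp, PowerSeries.coeff_mk]
    simp [Lq]
  | succ n =>
    set T : Polynomial ℚ := PowerSeries.trunc (n + 2) Lq with hT
    have hb : PowerSeries.coeff (n+1) (pcomp Lq f)
        = PowerSeries.coeff (n+1) (Polynomial.aeval f T) := coeff_pcomp hf Lq (by omega)
    have hdf : d⁄dX ℚ f = PowerSeries.exp ℚ := by
      rw [hfdef, map_sub, deriv_exp_eq, Derivation.map_one_eq_zero, sub_zero]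
    have hder : d⁄dX ℚ (Polynomial.aeval f T)
        = Polynomial.aeval f (Polynomial.derivative T * (1 + Polynomial.X)) := by
      rw [Derivation.map_aeval, smul_eq_mul, map_mul, hdf]
      congr 1
      rw [map_add, map_one, Polynomial.aeval_X, hfdef]
      ring
    have hTc : ∀ m ≤ n, (Polynomial.derivative T).coeff m = (-1 : ℚ) ^ m := by
      intro m hm
      rw [Polynomial.coeff_derivative, hT, PowerSeries.coeff_trunc, if_pos (by omega)]
      rw [Lq, PowerSeries.coeff_mk, if_neg (Nat.succ_ne_zero m)]
      have h3 : ((m+1 : ℕ) : ℚ) ≠ 0 := Nat.cast_ne_zero.mpr (Nat.succ_ne_zero m)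
      push_cast
      rw [pow_succ, pow_succ]
      field_simp
    have hcoeffT' : ∀ k ≤ n,
        (Polynomial.derivative T * (1 + Polynomial.X)).coeff k = if k = 0 then 1 else 0 := by
      intro k hk
      rw [mul_add, mul_one, Polynomial.coeff_add]
      cases k with
      | zero =>
        rw [Polynomial.coeff_mul_X_zero, hTc 0 (by omega)]
        simp
      | succ k =>
        rw [Polynomial.coeff_mul_X, hTc (k+1) hk, hTc k (by omega), if_neg (Nat.succ_ne_zero k)]
        rw [pow_succ]
        ring
    have h2 : PowerSeries.coeff n (d⁄dX ℚ (Polynomial.aeval f T))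
        = if n = 0 then 1 else 0 := by
      rw [hder, coeff_aeval hf,
        Finset.sum_congr rfl (fun k hk => by
          rw [hcoeffT' k (by have := Finset.mem_range.mp hk; omega)]),
        Finset.sum_eq_single 0 (fun k _ hk => by rw [if_neg hk, zero_mul]) (by simp)]
      simp [PowerSeries.coeff_one]
    rw [PowerSeries.coeff_derivative] at h2
    have h3 : ((n : ℚ) + 1) ≠ 0 := by positivity
    have h4 : PowerSeries.coeff (n+1) (Polynomial.aeval f T)
        = (if n = 0 then 1 else 0) / ((n : ℚ) + 1) := by
      rw [eq_div_iff h3]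
      exact_mod_cast h2
    rw [hb, h4, PowerSeries.coeff_X]
    cases n with
    | zero => norm_num
    | succ m => simp

lemma constCoeff_Lq : constantCoeff Lq = 0 := by
  rw [← PowerSeries.coeff_zero_eq_constantCoeff_apply, Lq, PowerSeries.coeff_mk]
  simp

lemma key_sum (j m : ℕ) :
    ∑ k ∈ Finset.range (m + 1),
        PowerSeries.coeff k (Lq ^ j) * PowerSeries.coeff m ((PowerSeries.exp ℚ - 1) ^ k)
      = if m = j then 1 else 0 := by
  have h := congrArg (PowerSeries.coeff m)
    ((pcomp_pow constCoeff_fexp Lq j).trans (by rw [pcomp_Lq_exp]))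
  rw [pcomp, PowerSeries.coeff_mk, PowerSeries.coeff_X_pow] at h
  exact h

end Aux

theorem stmt5 (n : ℕ) (hn : 1 ≤ n) :
    (1 : ℚ) = (-1 : ℚ) ^ (n - 1) / (n - 1).factorial *
      ∑ k ∈ Finset.Icc 1 n, belN k * S2 n k := by
  have hfac : ∀ m : ℕ, ((m.factorial : ℚ)) ≠ 0 :=
    fun m => Nat.cast_ne_zero.mpr (Nat.factorial_ne_zero m)
  have hsum : (∑ k ∈ Finset.Icc 1 n, belN k * S2 n k)
      = (-1 : ℚ) ^ (n - 1) * (n - 1).factorial := by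
    have step1 : (∑ k ∈ Finset.Icc 1 n, belN k * S2 n k)
        = ∑ k ∈ Finset.Ico 1 (n+1), ∑ j ∈ Finset.Ico 1 (k+1),
            ((-1 : ℚ) ^ (j - 1) * (j - 1).factorial * S1 k j) * S2 n k := by
      rw [Finset.Ico_add_one_right_eq_Icc]
      exact Finset.sum_congr rfl fun k _ => by
        rw [belN, ← Finset.Ico_add_one_right_eq_Icc, Finset.sum_mul]
    rw [step1, ← Finset.sum_Ico_Ico_comm]
    have inner : ∀ j ∈ Finset.Ico 1 (n+1),
        (∑ k ∈ Finset.Ico j (n+1),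
            ((-1 : ℚ) ^ (j - 1) * (j - 1).factorial * S1 k j) * S2 n k)
          = (-1 : ℚ) ^ (j - 1) * (j - 1).factorial * ((n.factorial : ℚ) / j.factorial)
              * (if n = j then 1 else 0) := by
      intro j hj
      obtain ⟨hj1, hjn⟩ := Finset.mem_Ico.mp hj
      have h1 : ∀ k ∈ Finset.Ico j (n+1),
          ((-1 : ℚ) ^ (j - 1) * (j - 1).factorial * S1 k j) * S2 n k
            = ((-1 : ℚ) ^ (j - 1) * (j - 1).factorial * ((n.factorial : ℚ) / j.factorial))
                * (PowerSeries.coeff k (Lq ^ j)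
                    * PowerSeries.coeff n ((PowerSeries.exp ℚ - 1) ^ k)) := by
        intro k _
        rw [S1, S2]
        field_simp
      rw [Finset.sum_congr rfl h1, ← Finset.mul_sum]
      congr 1
      rw [← key_sum j n]
      refine Finset.sum_subset ?_ fun k hk hk' => ?_
      · intro k hk
        simp only [Finset.mem_Ico] at hk
        simp only [Finset.mem_range]
        omega
      · have hkj : k < j := by
          simp only [Finset.mem_range] at hk
          simp only [Finset.mem_Ico] at hk'
          omega
        rw [coeff_pow_zero constCoeff_Lq hkj, zero_mul]
    rw [Finset.sum_congr rfl inner,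
      Finset.sum_eq_single_of_mem n (Finset.mem_Ico.mpr ⟨hn, Nat.lt_succ_self n⟩)
        (fun j _ hj => by rw [if_neg (fun h => hj h.symm), mul_zero]),
      if_pos rfl, mul_one, div_self (hfac n), mul_one]
  rw [hsum,
    show (-1 : ℚ) ^ (n - 1) / (n - 1).factorial
          * ((-1 : ℚ) ^ (n - 1) * (n - 1).factorial)
        = ((-1 : ℚ) ^ (n - 1) * (-1 : ℚ) ^ (n - 1))
            * (((n - 1).factorial : ℚ) / (n - 1).factorial) from by ring,
    ← pow_add, Even.neg_one_pow ⟨n - 1, rfl⟩, div_self (hfac (n - 1)), mul_one]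


end
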